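/- Let n ≥ 0 be an integer, let q_{2n+1}(t) = (1−t²) P′_{2n+1}(t) / P′_{2n+1}(0) (a polynomial of degree 2n+2), and define A(z) = Σ_{k=0}^{n+1} (−1)^k z^{2n+2−2k} q_{2n+1}^{(2k)}(0), B(z) = Σ_{k=0}^{n+1} (−1)^k z^{2n+2−2k} q_{2n+1}^{(2k)}(1), C(z) = Σ_{k=0}^{n} (−1)^{k+1} z^{2n+1−2k} q_{2n+1}^{(2k+1)}(1). Then for every real z, A(z) − B(z) cos z − C(z) sin z = z^{2n+3} ∫₀¹ sin(zt) q_{2n+1}(t) dt. -/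

import Mathlib

open Real Polynomial

/-- The Legendre polynomial of degree `m`, given by its explicit formula. -/
noncomputable def legendreP (m : ℕ) : Polynomial ℝ :=
  Polynomial.C (((2 : ℝ) ^ m)⁻¹) *
    ∑ k ∈ Finset.range (m / 2 + 1),
      Polynomial.C ((-1 : ℝ) ^ k * (Nat.factorial (2 * m - 2 * k) : ℝ) /
          ((Nat.factorial k : ℝ) * (Nat.factorial (m - k) : ℝ) *
            (Nat.factorial (m - 2 * k) : ℝ))) *
        Polynomial.X ^ (m - 2 * k)

lemma ibp_step (p : Polynomial ℝ) (z : ℝ) :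
    z ^ 2 * ∫ t in (0:ℝ)..1, Real.sin (z * t) * p.eval t =
      z * (p.eval 0 - Real.cos z * p.eval 1) + Real.sin z * (derivative p).eval 1 -
        ∫ t in (0:ℝ)..1, Real.sin (z * t) * (derivative (derivative p)).eval t := by
  rcases eq_or_ne z 0 with rfl | hz
  · simp
  have hsin : Continuous fun t : ℝ => Real.sin (z*t) :=
    Real.continuous_sin.comp (continuous_const.mul continuous_id)
  have hcos : Continuous fun t : ℝ => Real.cos (z*t) :=
    Real.continuous_cos.comp (continuous_const.mul continuous_id)
  have hv : ∀ t ∈ Set.uIcc (0:ℝ) 1, HasDerivAt (fun t => -Real.cos (z*t)/z) (Real.sin (z*t)) t := by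
    intro t _
    have h := (((Real.hasDerivAt_cos (z*t)).comp t ((hasDerivAt_id t).const_mul z)).neg).div_const z
    refine h.congr_deriv ?_
    field_simp
  have hw : ∀ t ∈ Set.uIcc (0:ℝ) 1, HasDerivAt (fun t => Real.sin (z*t)/z) (Real.cos (z*t)) t := by
    intro t _
    have h := ((Real.hasDerivAt_sin (z*t)).comp t ((hasDerivAt_id t).const_mul z)).div_const z
    refine h.congr_deriv ?_
    field_simp
  have hp : ∀ (r : Polynomial ℝ), ∀ t ∈ Set.uIcc (0:ℝ) 1,
      HasDerivAt (fun t => r.eval t) ((derivative r).eval t) t := fun r t _ => r.hasDerivAt t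
  have ibp1 : ∫ t in (0:ℝ)..1, p.eval t * Real.sin (z*t)
      = p.eval 1 * (-Real.cos (z*1)/z) - p.eval 0 * (-Real.cos (z*0)/z)
        - ∫ t in (0:ℝ)..1, (derivative p).eval t * (-Real.cos (z*t)/z) :=
    intervalIntegral.integral_mul_deriv_eq_deriv_mul (hp p) hv
      ((derivative p).continuous.intervalIntegrable _ _) (hsin.intervalIntegrable _ _)
  have ibp2 : ∫ t in (0:ℝ)..1, (derivative p).eval t * Real.cos (z*t)
      = (derivative p).eval 1 * (Real.sin (z*1)/z) - (derivative p).eval 0 * (Real.sin (z*0)/z)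
        - ∫ t in (0:ℝ)..1, (derivative (derivative p)).eval t * (Real.sin (z*t)/z) :=
    intervalIntegral.integral_mul_deriv_eq_deriv_mul (hp _) hw
      ((derivative (derivative p)).continuous.intervalIntegrable _ _) (hcos.intervalIntegrable _ _)
  have e1 : ∫ t in (0:ℝ)..1, (derivative p).eval t * (-Real.cos (z*t)/z)
      = (-z⁻¹) * ∫ t in (0:ℝ)..1, (derivative p).eval t * Real.cos (z*t) := by
    rw [← intervalIntegral.integral_const_mul]
    congr 1; funext t; ring
  have e2 : ∫ t in (0:ℝ)..1, (derivative (derivative p)).eval t * (Real.sin (z*t)/z)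
      = z⁻¹ * ∫ t in (0:ℝ)..1, (derivative (derivative p)).eval t * Real.sin (z*t) := by
    rw [← intervalIntegral.integral_const_mul]
    congr 1; funext t; ring
  have c1 : ∫ t in (0:ℝ)..1, Real.sin (z*t) * p.eval t
      = ∫ t in (0:ℝ)..1, p.eval t * Real.sin (z*t) := by
    congr 1; funext t; ring
  have c2 : ∫ t in (0:ℝ)..1, Real.sin (z*t) * (derivative (derivative p)).eval t
      = ∫ t in (0:ℝ)..1, (derivative (derivative p)).eval t * Real.sin (z*t) := by
    congr 1; funext t; ring
  rw [c1, c2, ibp1, e1, ibp2, e2]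
  simp only [mul_zero, mul_one, Real.cos_zero, Real.sin_zero]
  field_simp
  ring

lemma key (p : Polynomial ℝ) (z : ℝ) (m : ℕ) :
    z ^ (2*m) * ∫ t in (0:ℝ)..1, Real.sin (z*t) * p.eval t
    = (∑ k ∈ Finset.range m, (-1:ℝ)^k *
        (z ^ (2*m - 1 - 2*k) * ((derivative^[2*k] p).eval 0
            - Real.cos z * (derivative^[2*k] p).eval 1)
         + z ^ (2*m - 2 - 2*k) * Real.sin z * (derivative^[2*k+1] p).eval 1))
      + (-1:ℝ)^m * ∫ t in (0:ℝ)..1, Real.sin (z*t) * (derivative^[2*m] p).eval t := by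
  induction m with
  | zero => simp
  | succ m ih =>
    have hpow : z ^ (2*(m+1)) = z ^ 2 * z ^ (2*m) := by ring
    have hit : derivative^[2*(m+1)] p
        = derivative (derivative (derivative^[2*m] p)) := by
      rw [show 2*(m+1) = (2*m+1)+1 by ring, Function.iterate_succ_apply',
        Function.iterate_succ_apply']
    have hit1 : derivative^[2*m+1] p = derivative (derivative^[2*m] p) := by
      rw [Function.iterate_succ_apply']
    have hib := ibp_step (derivative^[2*m] p) z
    have hsum : ∀ k ∈ Finset.range m,
        z ^ 2 * ((-1:ℝ)^k *
          (z ^ (2*m - 1 - 2*k) * ((derivative^[2*k] p).eval 0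
              - Real.cos z * (derivative^[2*k] p).eval 1)
           + z ^ (2*m - 2 - 2*k) * Real.sin z * (derivative^[2*k+1] p).eval 1))
        = (-1:ℝ)^k *
          (z ^ (2*(m+1) - 1 - 2*k) * ((derivative^[2*k] p).eval 0
              - Real.cos z * (derivative^[2*k] p).eval 1)
           + z ^ (2*(m+1) - 2 - 2*k) * Real.sin z * (derivative^[2*k+1] p).eval 1) := by
      intro k hk
      rw [Finset.mem_range] at hk
      rw [show 2*(m+1) - 1 - 2*k = (2*m - 1 - 2*k) + 2 by omega,
        show 2*(m+1) - 2 - 2*k = (2*m - 2 - 2*k) + 2 by omega, pow_add, pow_add]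
      ring
    have hsum' := Finset.sum_congr rfl hsum
    rw [← Finset.mul_sum] at hsum'
    rw [hpow, mul_assoc, ih, Finset.sum_range_succ, hit, hit1,
      show 2*(m+1) - 1 - 2*m = 1 by omega, show 2*(m+1) - 2 - 2*m = 0 by omega]
    linear_combination hsum' + ((-1:ℝ)^m) * hib

theorem stmt9 (n : ℕ)
    (q : Polynomial ℝ)
    (hq : q = Polynomial.C (((Polynomial.derivative (legendreP (2 * n + 1))).eval 0)⁻¹) *
      ((1 - Polynomial.X ^ 2) * Polynomial.derivative (legendreP (2 * n + 1))))
    (A B C : ℝ → ℝ)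
    (hA : A = fun z => ∑ k ∈ Finset.range (n + 2),
      (-1 : ℝ) ^ k * z ^ (2 * n + 2 - 2 * k) * (Polynomial.derivative^[2 * k] q).eval 0)
    (hB : B = fun z => ∑ k ∈ Finset.range (n + 2),
      (-1 : ℝ) ^ k * z ^ (2 * n + 2 - 2 * k) * (Polynomial.derivative^[2 * k] q).eval 1)
    (hC : C = fun z => ∑ k ∈ Finset.range (n + 1),
      (-1 : ℝ) ^ (k + 1) * z ^ (2 * n + 1 - 2 * k) * (Polynomial.derivative^[2 * k + 1] q).eval 1) :
    ∀ z : ℝ, A z - B z * Real.cos z - C z * Real.sin z =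
      z ^ (2 * n + 3) * ∫ t in (0:ℝ)..1, Real.sin (z * t) * q.eval t := by
  -- degree bound
  have hL : (legendreP (2*n+1)).natDegree ≤ 2*n+1 := by
    unfold legendreP
    refine (Polynomial.natDegree_mul_le).trans ?_
    rw [Polynomial.natDegree_C, zero_add]
    refine Polynomial.natDegree_sum_le_of_forall_le _ _ ?_
    intro k hk
    refine (Polynomial.natDegree_mul_le).trans ?_
    rw [Polynomial.natDegree_C, zero_add, Polynomial.natDegree_X_pow]
    omega
  have hdeg : q.natDegree ≤ 2*n+2 := by
    rw [hq]
    refine (Polynomial.natDegree_mul_le).trans ?_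
    rw [Polynomial.natDegree_C, zero_add]
    refine (Polynomial.natDegree_mul_le).trans ?_
    have h1 : ((1 : Polynomial ℝ) - Polynomial.X ^ 2).natDegree ≤ 2 := by
      refine (Polynomial.natDegree_sub_le _ _).trans ?_
      simp [Polynomial.natDegree_X_pow]
    have h2 : (Polynomial.derivative (legendreP (2*n+1))).natDegree ≤ 2*n := by
      refine (Polynomial.natDegree_derivative_le _).trans ?_
      omega
    omega
  have hzero : derivative^[2*n+3] q = 0 :=
    Polynomial.iterate_derivative_eq_zero (by omega)
  have hzero4 : derivative^[2*(n+2)] q = 0 :=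
    Polynomial.iterate_derivative_eq_zero (by omega)
  intro z
  rcases eq_or_ne z 0 with rfl | hz
  · -- z = 0
    simp only [hA, hB, hC, Real.cos_zero, Real.sin_zero, mul_zero, mul_one, sub_zero]
    rw [zero_pow (by omega : 2*n+3 ≠ 0), zero_mul, ← Finset.sum_sub_distrib]
    refine Finset.sum_eq_zero ?_
    intro k hk
    rw [Finset.mem_range] at hk
    rcases eq_or_ne k (n+1) with rfl | hk'
    · have hcn : derivative^[2*(n+1)] q
          = Polynomial.C ((derivative^[2*(n+1)] q).coeff 0) := by
        refine Polynomial.eq_C_of_natDegree_le_zero ?_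
        have := Polynomial.natDegree_iterate_derivative q (2*(n+1))
        omega
      rw [hcn]
      simp
    · have : 2*n+2 - 2*k ≠ 0 := by omega
      rw [zero_pow this]
      ring
  · -- z ≠ 0
    have K := key q z (n+2)
    rw [hzero4] at K
    simp only [Polynomial.eval_zero, mul_zero, intervalIntegral.integral_zero,
      add_zero] at K
    apply mul_left_cancel₀ hz
    simp only [hA, hB, hC]
    set S := ∫ t in (0:ℝ)..1, Real.sin (z * t) * q.eval t with hS
    have E1 : (∑ k ∈ Finset.range (n+2),
        (-1:ℝ)^k * z^(2*(n+2)-1-2*k) * (derivative^[2*k] q).eval 0)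
        = z * ∑ k ∈ Finset.range (n+2),
          (-1:ℝ)^k * z^(2*n+2-2*k) * (derivative^[2*k] q).eval 0 := by
      rw [Finset.mul_sum]
      refine Finset.sum_congr rfl fun k hk => ?_
      rw [Finset.mem_range] at hk
      rw [show 2*(n+2)-1-2*k = (2*n+2-2*k)+1 by omega, pow_succ]
      ring
    have E2 : (∑ k ∈ Finset.range (n+2),
        (-1:ℝ)^k * z^(2*(n+2)-1-2*k) * (derivative^[2*k] q).eval 1)
        = z * ∑ k ∈ Finset.range (n+2),
          (-1:ℝ)^k * z^(2*n+2-2*k) * (derivative^[2*k] q).eval 1 := by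
      rw [Finset.mul_sum]
      refine Finset.sum_congr rfl fun k hk => ?_
      rw [Finset.mem_range] at hk
      rw [show 2*(n+2)-1-2*k = (2*n+2-2*k)+1 by omega, pow_succ]
      ring
    have E3 : (∑ k ∈ Finset.range (n+1),
        (-1:ℝ)^k * z^(2*(n+2)-2-2*k) * (derivative^[2*k+1] q).eval 1)
        = -(z * ∑ k ∈ Finset.range (n+1),
          (-1:ℝ)^(k+1) * z^(2*n+1-2*k) * (derivative^[2*k+1] q).eval 1) := by
      rw [Finset.mul_sum, ← Finset.sum_neg_distrib]
      refine Finset.sum_congr rfl fun k hk => ?_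
      rw [Finset.mem_range] at hk
      rw [show 2*(n+2)-2-2*k = (2*n+1-2*k)+1 by omega, pow_succ, pow_succ]
      ring
    have h3' : (∑ k ∈ Finset.range (n+2),
        (-1:ℝ)^k * z^(2*(n+2)-2-2*k) * (derivative^[2*k+1] q).eval 1)
        = ∑ k ∈ Finset.range (n+1),
          (-1:ℝ)^k * z^(2*(n+2)-2-2*k) * (derivative^[2*k+1] q).eval 1 := by
      rw [Finset.sum_range_succ, show 2*(n+1)+1 = 2*n+3 by ring, hzero]
      simp
    have hT : (∑ k ∈ Finset.range (n+2), (-1:ℝ)^k *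
        (z ^ (2*(n+2) - 1 - 2*k) * ((derivative^[2*k] q).eval 0
            - Real.cos z * (derivative^[2*k] q).eval 1)
         + z ^ (2*(n+2) - 2 - 2*k) * Real.sin z * (derivative^[2*k+1] q).eval 1))
        = (∑ k ∈ Finset.range (n+2),
            (-1:ℝ)^k * z^(2*(n+2)-1-2*k) * (derivative^[2*k] q).eval 0)
          - Real.cos z * (∑ k ∈ Finset.range (n+2),
            (-1:ℝ)^k * z^(2*(n+2)-1-2*k) * (derivative^[2*k] q).eval 1)
          + Real.sin z * (∑ k ∈ Finset.range (n+2),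
            (-1:ℝ)^k * z^(2*(n+2)-2-2*k) * (derivative^[2*k+1] q).eval 1) := by
      rw [Finset.mul_sum, Finset.mul_sum, ← Finset.sum_sub_distrib, ← Finset.sum_add_distrib]
      refine Finset.sum_congr rfl fun k _ => ?_
      ring
    linear_combination (-1:ℝ) * E1 + Real.cos z * E2 - Real.sin z * E3 - hT - K
      - Real.sin z * h3'
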